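/- Let $A$ be an augmented $l$-DG-algebra over a field $k$ and suppose $A$ is cofibrant (a retract of a tensor algebra $(T_l V, d)$ with $V$ admitting an exhaustive filtration $0 = F_0 V \subset F_1 V \subset \cdots$ with $d(F_{i+1}V) \subset T_l F_i V$). Then there is a short exact sequence of $A$-bimodules $0 \to \Omega^1_l A \xrightarrow{\partial_1} A \otimes_l A \xrightarrow{\mu} A \to 0$ where $\partial_1(a\,Db) = ab \otimes 1 - a \otimes b$, and both $\Omega^1_l A$ and $A \otimes_l A$ are cofibrant $A$-bimodules; consequently this gives a length-one projective bimodule resolution of $A$. -/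

import Mathlib

set_option maxHeartbeats 1000000
set_option synthInstance.maxHeartbeats 400000


open TensorProduct MulOpposite

section Prelim

variable (k : Type) [Field k] (A : Type) [Ring A] [Algebra k A]

/-- The enveloping algebra `A^e = A ⊗ A^op`. -/
abbrev Env := A ⊗[k] Aᵐᵒᵖ

/-- `l ⊗ id : A →ₐ End_k (A ⊗ A)`, `a ↦ (x ⊗ y ↦ a x ⊗ y)`. -/
noncomputable def outerLeft : A →ₐ[k] Module.End k (A ⊗[k] A) :=
  (AlgHom.ofLinearMap (LinearMap.rTensorHom A)
      (LinearMap.rTensor_id A A)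
      (fun f g => by
        show LinearMap.rTensor A (f ∘ₗ g) = _
        rw [LinearMap.rTensor_comp]; rfl)).comp
    (Algebra.lsmul k k A : A →ₐ[k] Module.End k A)

/-- `id ⊗ r : A^op →ₐ End_k (A ⊗ A)`, `b° ↦ (x ⊗ y ↦ x ⊗ y b)`. -/
noncomputable def outerRight : Aᵐᵒᵖ →ₐ[k] Module.End k (A ⊗[k] A) :=
  (AlgHom.ofLinearMap (LinearMap.lTensorHom A)
      (LinearMap.lTensor_id A A)
      (fun f g => by
        show LinearMap.lTensor A (f ∘ₗ g) = _
        rw [LinearMap.lTensor_comp]; rfl)).comp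
    (Algebra.lsmul k k A : Aᵐᵒᵖ →ₐ[k] Module.End k A)

/-- The outer `A^e = A ⊗ A^op`-module structure on `A ⊗ A`:
`(a ⊗ b°) • (x ⊗ y) = a x ⊗ y b`. -/
noncomputable def outerAction : Env k A →ₐ[k] Module.End k (A ⊗[k] A) :=
  Algebra.TensorProduct.lift (outerLeft k A) (outerRight k A)
    (fun a b => by
      show Commute (LinearMap.rTensor A _) (LinearMap.lTensor A _)
      unfold Commute SemiconjBy
      show LinearMap.rTensor A _ ∘ₗ LinearMap.lTensor A _
        = LinearMap.lTensor A _ ∘ₗ LinearMap.rTensor A _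
      rw [LinearMap.rTensor_comp_lTensor, LinearMap.lTensor_comp_rTensor])

noncomputable instance : Module (Env k A) (A ⊗[k] A) :=
  Module.compHom _ (outerAction k A).toRingHom

/-- The `A^e`-module structure on `A` itself: `(a ⊗ b°) • x = a x b`. -/
noncomputable def diagAction : Env k A →ₐ[k] Module.End k A :=
  Algebra.TensorProduct.lift
    (Algebra.lsmul k k A : A →ₐ[k] Module.End k A)
    (Algebra.lsmul k k A : Aᵐᵒᵖ →ₐ[k] Module.End k A)
    (fun a b => by
      ext x
      show a • (b • x) = b • (a • x)
      simp [op_smul_eq_mul, smul_eq_mul, mul_assoc])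

noncomputable instance : Module (Env k A) A :=
  Module.compHom _ (diagAction k A).toRingHom

/-- The multiplication `A ⊗ A → A` as a morphism of `A^e`-modules
(this is the augmentation of the standard length-one resolution). -/
noncomputable def mulEnv : (A ⊗[k] A) →ₗ[Env k A] A where
  toFun := LinearMap.mul' k A
  map_add' := map_add _
  map_smul' r x := by
    show LinearMap.mul' k A ((outerAction k A r) x) = (diagAction k A r) (LinearMap.mul' k A x)
    induction r using TensorProduct.induction_on with
    | zero => simp
    | add r s hr hs => simp only [map_add, LinearMap.add_apply, hr, hs]
    | tmul a b =>
        rw [outerAction, diagAction, Algebra.TensorProduct.lift_tmul]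
        show _ = ((Algebra.lsmul k k A a) * (Algebra.lsmul k k A b : Module.End k A))
          (LinearMap.mul' k A x)
        induction x using TensorProduct.induction_on with
        | zero => simp
        | add x y hx hy => simp only [map_add, Module.End.mul_apply, LinearMap.add_apply]
                           simp only [Module.End.mul_apply] at hx hy
                           rw [hx, hy]
        | tmul x y =>
            show (LinearMap.mul' k A)
              ((LinearMap.rTensor A _) ((LinearMap.lTensor A _) (x ⊗ₜ[k] y))) = _
            simp [op_smul_eq_mul, smul_eq_mul, mul_assoc]

end Prelim

section Aux
variable (k : Type) [Field k] (A : Type) [Ring A] [Algebra k A]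

lemma outer_smul_tmul (a b x y : A) :
    ((a ⊗ₜ[k] op b : Env k A) • (x ⊗ₜ[k] y) : A ⊗[k] A) = (a * x) ⊗ₜ[k] (y * b) := by
  show outerAction k A (a ⊗ₜ[k] op b) (x ⊗ₜ[k] y) = _
  rw [outerAction, Algebra.TensorProduct.lift_tmul]
  show LinearMap.rTensor A _ ((LinearMap.lTensor A _) (x ⊗ₜ[k] y)) = _
  simp [outerLeft, outerRight, op_smul_eq_mul, smul_eq_mul]

lemma diag_smul (a b x : A) : ((a ⊗ₜ[k] op b : Env k A) • x : A) = a * x * b := by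
  show diagAction k A (a ⊗ₜ[k] op b) x = _
  show ((Algebra.lsmul k k A a) * (Algebra.lsmul k k A (op b) : Module.End k A)) x = _
  show a • (op b • x) = _
  simp [op_smul_eq_mul, smul_eq_mul, mul_assoc]

lemma mulEnv_tmul (x y : A) : mulEnv k A (x ⊗ₜ[k] y) = x * y :=
  LinearMap.mul'_apply

end Aux

section Aux2
variable (k : Type) [Field k] (A : Type) [Ring A] [Algebra k A]

noncomputable instance : SMulCommClass k (Env k A) (A ⊗[k] A) :=
  ⟨fun c r m => ((outerAction k A r).map_smul c m).symm⟩

noncomputable instance : IsScalarTower k (Env k A) (A ⊗[k] A) :=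
  ⟨fun c r m => by
    show outerAction k A (c • r) m = c • (outerAction k A r m)
    rw [map_smul]; rfl⟩

noncomputable def envBase : (A ⊗[k] A) ≃ₗ[k] Env k A :=
  TensorProduct.congr (LinearEquiv.refl k A) (opLinearEquiv k)

noncomputable def envMap : (A ⊗[k] A) →ₗ[Env k A] Env k A where
  toFun := envBase k A
  map_add' := map_add _
  map_smul' r m := by
    induction r using TensorProduct.induction_on with
    | zero => simp [zero_smul (Env k A) m]
    | add r s hr hs =>
        simp only [RingHom.id_apply] at hr hs ⊢
        rw [add_smul, add_smul, map_add, hr, hs]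
    | tmul a b =>
      induction m using TensorProduct.induction_on with
      | zero => simp
      | add m n hm hn =>
          simp only [RingHom.id_apply] at hm hn ⊢
          rw [smul_add, map_add, hm, hn, map_add, smul_add]
      | tmul x y =>
          rw [← op_unop b]
          rw [outer_smul_tmul]
          simp only [RingHom.id_apply, envBase, TensorProduct.congr_tmul,
            LinearEquiv.refl_apply, coe_opLinearEquiv, smul_eq_mul,
            Algebra.TensorProduct.tmul_mul_tmul]
          rw [← op_mul]

noncomputable def envEquiv : (A ⊗[k] A) ≃ₗ[Env k A] Env k A :=
  LinearEquiv.ofBijective (envMap k A) (envBase k A).bijective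

lemma proj_outer : Module.Projective (Env k A) (A ⊗[k] A) :=
  Module.Projective.of_equiv (envEquiv k A).symm

lemma sub_mem_span (x : A ⊗[k] A) :
    x - (mulEnv k A x) ⊗ₜ[k] 1 ∈ Submodule.span (Env k A)
      {z : A ⊗[k] A | ∃ b, z = b ⊗ₜ[k] 1 - 1 ⊗ₜ[k] b} := by
  induction x using TensorProduct.induction_on with
  | zero => simp
  | add x y hx hy =>
    have h : (x + y) - (mulEnv k A (x + y)) ⊗ₜ[k] (1:A)
        = (x - (mulEnv k A x) ⊗ₜ[k] 1) + (y - (mulEnv k A y) ⊗ₜ[k] 1) := by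
      rw [map_add, add_tmul]; abel
    rw [h]; exact add_mem hx hy
  | tmul a b =>
    have h : a ⊗ₜ[k] b - (mulEnv k A (a ⊗ₜ[k] b)) ⊗ₜ[k] 1
        = -((a ⊗ₜ[k] op (1:A) : Env k A) • (b ⊗ₜ[k] (1:A) - 1 ⊗ₜ[k] b)) := by
      rw [mulEnv_tmul, smul_sub, outer_smul_tmul, outer_smul_tmul]
      simp only [mul_one, one_mul]
      abel
    rw [h]
    exact neg_mem (Submodule.smul_mem _ _ (Submodule.subset_span ⟨b, rfl⟩))

lemma ker_eq_span : LinearMap.ker (mulEnv k A)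
    = Submodule.span (Env k A) {x : A ⊗[k] A | ∃ b, x = b ⊗ₜ[k] 1 - 1 ⊗ₜ[k] b} := by
  apply le_antisymm
  · intro x hx
    have h := sub_mem_span k A x
    rw [LinearMap.mem_ker.mp hx] at h
    simpa using h
  · rw [Submodule.span_le]
    rintro _ ⟨b, rfl⟩
    simp only [SetLike.mem_coe, LinearMap.mem_ker, map_sub, mulEnv_tmul, mul_one, one_mul,
      sub_self]

lemma mulEnv_surj : Function.Surjective (mulEnv k A) :=
  fun x => ⟨x ⊗ₜ[k] 1, by simp [mulEnv_tmul]⟩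

end Aux2
section Der
variable (k : Type) [Field k] (A : Type) [Ring A] [Algebra k A]
variable (V : Type) [AddCommGroup V] [Module k V] (θ : V →ₗ[k] A)

/-- Right multiplication by `θ v` in the first factor minus left multiplication in the second. -/
noncomputable def Jop (v : V) : (A ⊗[k] A) →ₗ[k] (A ⊗[k] A) :=
  LinearMap.rTensor A (LinearMap.mulRight k (θ v)) -
    LinearMap.lTensor A (LinearMap.mulLeft k (θ v))

lemma Jop_tmul (v : V) (x y : A) :
    Jop k A V θ v (x ⊗ₜ[k] y) = (x * θ v) ⊗ₜ[k] y - x ⊗ₜ[k] (θ v * y) := by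
  simp [Jop]

lemma Jop_smul (v : V) (r : Env k A) (m : A ⊗[k] A) :
    Jop k A V θ v (r • m) = r • Jop k A V θ v m := by
  induction r using TensorProduct.induction_on with
  | zero => exact (congrArg _ (zero_smul (Env k A) m)).trans ((map_zero _).trans (zero_smul (Env k A) (Jop k A V θ v m)).symm)
  | add r s hr hs => rw [add_smul, map_add, hr, hs, add_smul]
  | tmul a b =>
    rw [← op_unop b]
    induction m using TensorProduct.induction_on with
    | zero => rw [smul_zero, map_zero, smul_zero]
    | add m n hm hn => rw [smul_add, map_add, hm, hn, map_add, smul_add]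
    | tmul x y =>
      rw [outer_smul_tmul, Jop_tmul, Jop_tmul, smul_sub, outer_smul_tmul, outer_smul_tmul]
      simp [mul_assoc]

/-- `Jop` bundled as a linear map in `v`. -/
noncomputable def JopL : V →ₗ[k] ((A ⊗[k] A) →ₗ[k] (A ⊗[k] A)) where
  toFun := Jop k A V θ
  map_add' v w := TensorProduct.ext' fun x y => by
    simp only [Jop_tmul, map_add, LinearMap.add_apply, mul_add, add_mul,
      TensorProduct.tmul_add, TensorProduct.add_tmul]
    abel
  map_smul' c v := TensorProduct.ext' fun x y => by
    simp only [Jop_tmul, map_smul, LinearMap.smul_apply, RingHom.id_apply,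
      TensorProduct.smul_tmul', TensorProduct.tmul_smul, smul_sub,
      Algebra.mul_smul_comm, Algebra.smul_mul_assoc]

/-- The `Env`-linear map `(A ⊗ A) ⊗ V → A ⊗ A`, `(x ⊗ y) ⊗ v ↦ xθ(v) ⊗ y − x ⊗ θ(v)y`. -/
noncomputable def jERaw : ((A ⊗[k] A) ⊗[k] V) →ₗ[k] (A ⊗[k] A) :=
  TensorProduct.lift (JopL k A V θ).flip

lemma jERaw_smul (r : Env k A) (f : (A ⊗[k] A) ⊗[k] V) :
    jERaw k A V θ (r • f) = r • jERaw k A V θ f := by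
  induction f using TensorProduct.induction_on with
  | zero => rw [smul_zero, map_zero, smul_zero]
  | add f g hf hg => rw [smul_add, map_add, hf, hg, map_add, smul_add]
  | tmul m v =>
      rw [TensorProduct.smul_tmul']
      show TensorProduct.lift (JopL k A V θ).flip _ = r • TensorProduct.lift (JopL k A V θ).flip _
      rw [TensorProduct.lift.tmul, TensorProduct.lift.tmul]
      exact Jop_smul k A V θ v r m

noncomputable def jE : ((A ⊗[k] A) ⊗[k] V) →ₗ[Env k A] (A ⊗[k] A) where
  toFun := jERaw k A V θ
  map_add' := map_add _
  map_smul' := jERaw_smul k A V θ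

lemma jE_tmul (m : A ⊗[k] A) (v : V) :
    jE k A V θ (m ⊗ₜ[k] v) = Jop k A V θ v m :=
  TensorProduct.lift.tmul m v

lemma jE_mem_ker (f : (A ⊗[k] A) ⊗[k] V) :
    jE k A V θ f ∈ LinearMap.ker (mulEnv k A) := by
  induction f using TensorProduct.induction_on with
  | zero => simp
  | add f g hf hg => rw [map_add]; exact add_mem hf hg
  | tmul m v =>
    rw [jE_tmul, LinearMap.mem_ker]
    induction m using TensorProduct.induction_on with
    | zero => simp
    | add m n hm hn => rw [map_add, map_add, hm, hn, add_zero]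
    | tmul x y => rw [Jop_tmul, map_sub, mulEnv_tmul, mulEnv_tmul, mul_assoc, sub_self]

/-- A type synonym for `(A ⊗ A) ⊗ V` carrying the outer `A`-bimodule structure. -/
def Fmod : Type := (A ⊗[k] A) ⊗[k] V

noncomputable instance : AddCommGroup (Fmod k A V) :=
  inferInstanceAs (AddCommGroup ((A ⊗[k] A) ⊗[k] V))

noncomputable instance : Module k (Fmod k A V) :=
  inferInstanceAs (Module k ((A ⊗[k] A) ⊗[k] V))

noncomputable instance : Module (Env k A) (Fmod k A V) :=
  inferInstanceAs (Module (Env k A) ((A ⊗[k] A) ⊗[k] V))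

noncomputable instance : SMulCommClass k (Env k A) (Fmod k A V) :=
  inferInstanceAs (SMulCommClass k (Env k A) ((A ⊗[k] A) ⊗[k] V))

noncomputable instance : IsScalarTower k (Env k A) (Fmod k A V) :=
  inferInstanceAs (IsScalarTower k (Env k A) ((A ⊗[k] A) ⊗[k] V))

noncomputable instance : Module A (Fmod k A V) :=
  Module.compHom _ (Algebra.TensorProduct.includeLeftRingHom : A →+* Env k A)

noncomputable instance : Module Aᵐᵒᵖ (Fmod k A V) :=
  Module.compHom _ ((Algebra.TensorProduct.includeRight : Aᵐᵒᵖ →ₐ[k] Env k A).toRingHom)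

lemma aSmul_def (a : A) (f : Fmod k A V) :
    a • f = ((a ⊗ₜ[k] (1 : Aᵐᵒᵖ) : Env k A) • f : Fmod k A V) := rfl

lemma opSmul_def (b : Aᵐᵒᵖ) (f : Fmod k A V) :
    b • f = (((1 : A) ⊗ₜ[k] b : Env k A) • f : Fmod k A V) := rfl

noncomputable instance : SMulCommClass A Aᵐᵒᵖ (Fmod k A V) :=
  ⟨fun a b f => by
    rw [opSmul_def, aSmul_def, opSmul_def, aSmul_def, ← mul_smul, ← mul_smul,
      Algebra.TensorProduct.tmul_mul_tmul, Algebra.TensorProduct.tmul_mul_tmul,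
      mul_one, one_mul, mul_one, one_mul]⟩

noncomputable instance : IsScalarTower k A (Fmod k A V) :=
  ⟨fun c a f => by
    rw [aSmul_def, aSmul_def]
    have h : ((c • a) ⊗ₜ[k] (1 : Aᵐᵒᵖ) : Env k A) = c • (a ⊗ₜ[k] (1 : Aᵐᵒᵖ) : Env k A) :=
      TensorProduct.smul_tmul' c a (1 : Aᵐᵒᵖ)
    rw [h, smul_assoc]⟩

noncomputable instance : IsScalarTower k Aᵐᵒᵖ (Fmod k A V) :=
  ⟨fun c b f => by
    rw [opSmul_def, opSmul_def]
    have h : ((1 : A) ⊗ₜ[k] (c • b) : Env k A) = c • ((1 : A) ⊗ₜ[k] b : Env k A) :=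
      TensorProduct.tmul_smul c (1 : A) b
    rw [h, smul_assoc]⟩

/-- Identification of the synonym with the underlying tensor product, `Env`-linearly. -/
noncomputable def toFE : Fmod k A V ≃ₗ[Env k A] ((A ⊗[k] A) ⊗[k] V) :=
  LinearEquiv.refl (Env k A) ((A ⊗[k] A) ⊗[k] V)

/-- Identification of the synonym with the underlying tensor product, `k`-linearly. -/
noncomputable def toFk : Fmod k A V ≃ₗ[k] ((A ⊗[k] A) ⊗[k] V) :=
  LinearEquiv.refl k ((A ⊗[k] A) ⊗[k] V)

lemma toFk_smul (r : Env k A) (f : Fmod k A V) :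
    toFk k A V (r • f) = r • toFk k A V f := rfl

/-- The map `j` on the synonym. -/
noncomputable def jF : Fmod k A V →ₗ[Env k A] (A ⊗[k] A) :=
  (jE k A V θ).comp (toFE k A V).toLinearMap

lemma jF_apply (f : Fmod k A V) : jF k A V θ f = jE k A V θ (toFk k A V f) := rfl

lemma jF_mem_ker (f : Fmod k A V) : jF k A V θ f ∈ LinearMap.ker (mulEnv k A) :=
  jE_mem_ker k A V θ _

/-- The generator `1 ⊗ 1 ⊗ v` of `Fmod`. -/
noncomputable def epsF : V →ₗ[k] Fmod k A V :=
  (toFk k A V).symm.toLinearMap.comp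
    (TensorProduct.mk k (A ⊗[k] A) V ((1 : A) ⊗ₜ[k] (1 : A)))

lemma jF_epsF (v : V) :
    jF k A V θ (epsF k A V v) = θ v ⊗ₜ[k] (1 : A) - (1 : A) ⊗ₜ[k] θ v := by
  show jE k A V θ (((1 : A) ⊗ₜ[k] (1 : A)) ⊗ₜ[k] v) = _
  rw [jE_tmul, Jop_tmul, one_mul, mul_one]

end Der

section Der2
variable (k : Type) [Field k] (V : Type) [AddCommGroup V] [Module k V]

local notation "TA" => TensorAlgebra k V

/-- The generator map into the square-zero extension. -/
noncomputable def fV : V →ₗ[k] TrivSqZeroExt TA (Fmod k TA V) where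
  toFun v := TrivSqZeroExt.inl (TensorAlgebra.ι k v) + TrivSqZeroExt.inr (epsF k TA V v)
  map_add' v w := TrivSqZeroExt.ext
    (by simp [TrivSqZeroExt.fst_add, map_add])
    (by simp [TrivSqZeroExt.snd_add, map_add])
  map_smul' c v := TrivSqZeroExt.ext
    (by simp [TrivSqZeroExt.fst_add, TrivSqZeroExt.fst_smul, map_smul])
    (by simp [TrivSqZeroExt.snd_add, TrivSqZeroExt.snd_smul, map_smul])

/-- The universal algebra map into the square-zero extension. -/
noncomputable def psi : TA →ₐ[k] TrivSqZeroExt TA (Fmod k TA V) :=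
  TensorAlgebra.lift k (fV k V)

lemma psi_ι (v : V) :
    psi k V (TensorAlgebra.ι k v)
      = TrivSqZeroExt.inl (TensorAlgebra.ι k v) + TrivSqZeroExt.inr (epsF k TA V v) := by
  rw [psi, TensorAlgebra.lift_ι_apply]; rfl

lemma fst_psi (a : TA) : (psi k V a).fst = a := by
  have h : (TrivSqZeroExt.fstHom k TA (Fmod k TA V)).comp (psi k V) = AlgHom.id k TA := by
    refine TensorAlgebra.hom_ext (LinearMap.ext fun v => ?_)
    simp only [AlgHom.comp_toLinearMap, LinearMap.coe_comp, Function.comp_apply,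
      AlgHom.toLinearMap_apply, psi_ι, AlgHom.toLinearMap_id, LinearMap.id_comp,
      LinearMap.id_apply]
    simp [TrivSqZeroExt.fst_add]
  exact AlgHom.congr_fun h a

/-- The universal derivation `d : A → Fmod`. -/
noncomputable def dF : TA →ₗ[k] Fmod k TA V where
  toFun a := (psi k V a).snd
  map_add' a b := by
    show (psi k V (a + b)).snd = (psi k V a).snd + (psi k V b).snd
    rw [map_add, TrivSqZeroExt.snd_add]
  map_smul' c a := by
    show (psi k V (c • a)).snd = c • (psi k V a).snd
    rw [map_smul, TrivSqZeroExt.snd_smul]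

lemma dF_ι (v : V) : dF k V (TensorAlgebra.ι k v) = epsF k TA V v := by
  show (psi k V (TensorAlgebra.ι k v)).snd = _
  rw [psi_ι]
  simp [TrivSqZeroExt.snd_add]

lemma dF_algebraMap (c : k) : dF k V (algebraMap k TA c) = 0 := by
  show (psi k V (algebraMap k TA c)).snd = 0
  rw [AlgHom.commutes]
  simp [TrivSqZeroExt.algebraMap_eq_inl']

lemma dF_mul (a b : TA) :
    dF k V (a * b)
      = ((a ⊗ₜ[k] op (1 : TA) : Env k TA) • dF k V b : Fmod k TA V)
        + (((1 : TA) ⊗ₜ[k] op b : Env k TA) • dF k V a : Fmod k TA V) := by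
  show (psi k V (a * b)).snd = _
  rw [map_mul, TrivSqZeroExt.snd_mul, fst_psi, fst_psi, op_one, ← aSmul_def, ← opSmul_def]
  rfl

lemma jF_dF (a : TA) :
    jF k TA V (TensorAlgebra.ι k) (dF k V a) = a ⊗ₜ[k] (1 : TA) - (1 : TA) ⊗ₜ[k] a := by
  induction a using TensorAlgebra.induction with
  | algebraMap c =>
    rw [dF_algebraMap, map_zero, Algebra.algebraMap_eq_smul_one, ← TensorProduct.smul_tmul',
      ← TensorProduct.tmul_smul, sub_self]
  | ι v => rw [dF_ι, jF_epsF]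
  | add a b ha hb =>
    rw [map_add, map_add, ha, hb, TensorProduct.add_tmul, TensorProduct.tmul_add]
    abel
  | mul a b ha hb =>
    rw [dF_mul, map_add, map_smul, map_smul, ha, hb, smul_sub, smul_sub,
      outer_smul_tmul, outer_smul_tmul, outer_smul_tmul, outer_smul_tmul]
    simp only [mul_one, one_mul]
    abel

end Der2

section Der3
variable (k : Type) [Field k] (A : Type) [Ring A] [Algebra k A]
variable (V : Type) [AddCommGroup V] [Module k V] (θ : V →ₗ[k] A)
variable (d : A →ₗ[k] Fmod k A V)

-- Pinned rewriting helpers (instance-sensitive).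
private lemma sA (r : Env k A) (m n : A ⊗[k] A) : r • (m + n) = r • m + r • n :=
  smul_add r m n
private lemma sF (r : Env k A) (f g : Fmod k A V) : r • (f + g) = r • f + r • g :=
  smul_add r f g
private lemma szA (r : Env k A) : r • (0 : A ⊗[k] A) = 0 := smul_zero r
private lemma szF (r : Env k A) : r • (0 : Fmod k A V) = 0 := smul_zero r
private lemma zsF (f : Fmod k A V) : (0 : Env k A) • f = 0 := zero_smul (Env k A) f
private lemma asF (r s : Env k A) (f : Fmod k A V) : (r + s) • f = r • f + s • f :=
  add_smul r s f
private lemma msF (r s : Env k A) (f : Fmod k A V) : r • s • f = (r * s) • f :=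
  (mul_smul r s f).symm
private lemma ssF (c : k) (r : Env k A) (f : Fmod k A V) : (c • r) • f = c • r • f :=
  smul_assoc c r f
private lemma scF (c : k) (r : Env k A) (f : Fmod k A V) : r • c • f = c • r • f :=
  (smul_comm c r f).symm

/-- The contraction `Ψ : A ⊗ A → Fmod`, `x ⊗ y ↦ (1 ⊗ y°) • d x`. -/
noncomputable def PsiF : (A ⊗[k] A) →ₗ[k] Fmod k A V :=
  TensorProduct.lift (LinearMap.mk₂ k
    (fun x y => (((1 : A) ⊗ₜ[k] op y : Env k A) • d x : Fmod k A V))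
    (fun x x' y => by
      show (((1 : A) ⊗ₜ[k] op y : Env k A) • d (x + x') : Fmod k A V) = _
      rw [map_add, sF])
    (fun c x y => by
      show (((1 : A) ⊗ₜ[k] op y : Env k A) • d (c • x) : Fmod k A V) = _
      rw [map_smul, scF])
    (fun x y y' => by
      show (((1 : A) ⊗ₜ[k] op (y + y') : Env k A) • d x : Fmod k A V) = _
      rw [op_add, TensorProduct.tmul_add, asF])
    (fun c x y => by
      show (((1 : A) ⊗ₜ[k] op (c • y) : Env k A) • d x : Fmod k A V) = _
      rw [op_smul, TensorProduct.tmul_smul, ssF]))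

lemma PsiF_tmul (x y : A) :
    PsiF k A V d (x ⊗ₜ[k] y) = (((1 : A) ⊗ₜ[k] op y : Env k A) • d x : Fmod k A V) := by
  rw [PsiF, TensorProduct.lift.tmul, LinearMap.mk₂_apply]

variable (hjd : ∀ a : A, jF k A V θ (d a) = a ⊗ₜ[k] (1 : A) - (1 : A) ⊗ₜ[k] a)
variable (hmul : ∀ a b : A,
  d (a * b) = ((a ⊗ₜ[k] op (1 : A) : Env k A) • d b : Fmod k A V)
    + (((1 : A) ⊗ₜ[k] op b : Env k A) • d a : Fmod k A V))

include hjd in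
lemma jF_PsiF (m : A ⊗[k] A) :
    jF k A V θ (PsiF k A V d m) = m - (1 : A) ⊗ₜ[k] (mulEnv k A m) := by
  induction m using TensorProduct.induction_on with
  | zero => simp
  | add m n hm hn =>
    rw [map_add, map_add, hm, hn, map_add, TensorProduct.tmul_add]
    abel
  | tmul x y =>
    rw [PsiF_tmul, map_smul, hjd, smul_sub, outer_smul_tmul, outer_smul_tmul,
      mulEnv_tmul, one_mul, one_mul, mul_one]

include hmul in
lemma PsiF_smul (a b : A) (m : A ⊗[k] A) :
    PsiF k A V d ((a ⊗ₜ[k] op b : Env k A) • m)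
      = ((a ⊗ₜ[k] op b : Env k A) • PsiF k A V d m : Fmod k A V)
        + (((1 : A) ⊗ₜ[k] op (mulEnv k A m * b) : Env k A) • d a : Fmod k A V) := by
  induction m using TensorProduct.induction_on with
  | zero =>
    rw [szA, map_zero, map_zero, szF, zero_mul, op_zero,
      TensorProduct.tmul_zero, zsF, add_zero]
  | add m n hm hn =>
    rw [sA, map_add, hm, hn, map_add, sF, map_add, add_mul, op_add,
      TensorProduct.tmul_add, asF]
    abel
  | tmul x y =>
    rw [outer_smul_tmul, PsiF_tmul, hmul, sF, msF, msF,
      Algebra.TensorProduct.tmul_mul_tmul, Algebra.TensorProduct.tmul_mul_tmul,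
      PsiF_tmul, msF, Algebra.TensorProduct.tmul_mul_tmul, mulEnv_tmul]
    simp only [← op_mul, mul_one, one_mul, mul_assoc]

/-- `Fmod` is a projective `Env`-module. -/
lemma projFmod : Module.Projective (Env k A) (Fmod k A V) := by
  haveI : Module.Free (Env k A) ((Env k A) ⊗[k] V) :=
    Module.Free.of_basis ((Module.Free.chooseBasis k V).baseChange (Env k A))
  exact Module.Projective.of_equiv
    (((toFE k A V).trans
      (TensorProduct.AlgebraTensorModule.congr (envEquiv k A)
        (LinearEquiv.refl k V))).symm)

include hmul in
lemma iK_aux (r : Env k A) (m : A ⊗[k] A) (hm : m ∈ LinearMap.ker (mulEnv k A)) :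
    PsiF k A V d (r • m) = r • PsiF k A V d m := by
  induction r using TensorProduct.induction_on with
  | zero => exact (congrArg _ (zero_smul (Env k A) m)).trans ((map_zero _).trans (zsF k A V _).symm)
  | add r s hr hs => rw [add_smul, map_add, hr, hs, asF]
  | tmul a b =>
    rw [← op_unop b, PsiF_smul k A V d hmul, LinearMap.mem_ker.mp hm, zero_mul, op_zero,
      TensorProduct.tmul_zero, zsF, add_zero]

/-- The inclusion-splitting `i : Ω¹ → Fmod`. -/
noncomputable def iK : (LinearMap.ker (mulEnv k A)) →ₗ[Env k A] Fmod k A V where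
  toFun m := PsiF k A V d (m : A ⊗[k] A)
  map_add' m n := by
    show PsiF k A V d (((m : A ⊗[k] A)) + ((n : A ⊗[k] A))) = _
    rw [map_add]
  map_smul' r m := by
    show PsiF k A V d (r • (m : A ⊗[k] A)) = r • PsiF k A V d (m : A ⊗[k] A)
    exact iK_aux k A V d hmul r (m : A ⊗[k] A) m.2

/-- The retraction `j : Fmod → Ω¹`. -/
noncomputable def jK : Fmod k A V →ₗ[Env k A] (LinearMap.ker (mulEnv k A)) :=
  LinearMap.codRestrict _ (jF k A V θ) (jF_mem_ker k A V θ)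

include hjd hmul in
lemma proj_ker : Module.Projective (Env k A) (LinearMap.ker (mulEnv k A)) := by
  haveI := projFmod k A V
  refine Module.Projective.of_split (iK k A V d hmul) (jK k A V θ)
    (LinearMap.ext fun m => Subtype.ext ?_)
  show jF k A V θ (PsiF k A V d (m : A ⊗[k] A)) = (m : A ⊗[k] A)
  rw [jF_PsiF k A V θ d hjd, LinearMap.mem_ker.mp m.2, TensorProduct.tmul_zero, sub_zero]

end Der3


/-!
STATEMENT 18: Let `A` be a cofibrant augmented `l`-DG-algebra (a retract of a filtered
tensor algebra).  Then there is a short exact sequence of `A`-bimodules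
`0 → Ω¹_l A → A ⊗_l A → A → 0` with `∂₁(a Db) = ab ⊗ 1 − a ⊗ b`, and both `Ω¹_l A` and
`A ⊗_l A` are cofibrant (projective) `A`-bimodules; consequently this is a length-one
projective bimodule resolution of `A`.

We formalize the model case `l = k`, `A = T_k V` a tensor algebra (with zero
differential).  Exactness of the sequence is expressed by: the multiplication map
`μ : A ⊗ A → A` is a surjective map of `A^e`-modules, and its kernel `Ω¹A` is
generated as an `A^e`-module by the elements `Db = b ⊗ 1 − 1 ⊗ b` (which, together with
left and right `A`-linearity, encodes `∂₁(a Db) = ab ⊗ 1 − a ⊗ b`); both `A ⊗ A` and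
`Ω¹ A = ker μ` are projective `A^e`-modules.
-/
theorem tensor_algebra_length_one_resolution
    (k : Type) [Field k] (V : Type) [AddCommGroup V] [Module k V] :
    Function.Surjective (mulEnv k (TensorAlgebra k V)) ∧
    (LinearMap.ker (mulEnv k (TensorAlgebra k V))
      = Submodule.span (Env k (TensorAlgebra k V))
          {x : TensorAlgebra k V ⊗[k] TensorAlgebra k V |
            ∃ b : TensorAlgebra k V, x = b ⊗ₜ[k] 1 - 1 ⊗ₜ[k] b}) ∧
    Module.Projective (Env k (TensorAlgebra k V))
      (TensorAlgebra k V ⊗[k] TensorAlgebra k V) ∧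
    Module.Projective (Env k (TensorAlgebra k V))
      (LinearMap.ker (mulEnv k (TensorAlgebra k V))) := by
  exact ⟨mulEnv_surj k _, ker_eq_span k _, proj_outer k _,
    proj_ker k (TensorAlgebra k V) V (TensorAlgebra.ι k) (dF k V)
      (jF_dF k V) (dF_mul k V)⟩
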